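/- Let K be an infinite field of characteristic ≠ 2 and let a, b be functions assigning to each ordered pair (λ, μ) ∈ K × K with λ ≠ μ nonzero elements a(λ,μ), b(λ,μ) ∈ K, and suppose that for all pairwise distinct λ, μ, ν ∈ K: (1) a(λ,μ)a(λ,ν) − a(λ,μ)a(μ,ν) − a(λ,ν)a(ν,μ) = 0; (2) a(λ,μ)b(λ,ν) − a(λ,μ)b(μ,ν) − b(λ,ν)b(ν,μ) = 0; (3) a(λ,ν)b(λ,μ) − a(λ,ν)b(ν,μ) − b(λ,μ)b(μ,ν) = 0; (4) a(μ,ν)b(λ,μ) + a(ν,μ)b(λ,ν) − b(λ,μ)b(λ,ν) = 0. Then there exist an injective function f : K → K and a nowhere-vanishing function g : K → K such that either (ii) a(λ,μ) = b(λ,μ) = g(μ)/(f(λ) − f(μ)) for all λ ≠ μ, or (iii) f(λ) + f(μ) ≠ 0 for all λ ≠ μ and a(λ,μ) = g(μ)/(f(λ) − f(μ)), b(λ,μ) = −g(μ)/(f(λ) + f(μ)) for all λ ≠ μ. -/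

import Mathlib

/-- Classification (Avan–Talon type): if `a` and `b` assign nonzero values to ordered pairs
of distinct elements of an infinite field `K` of characteristic ≠ 2 and satisfy the four
coefficient equations of the classical Yang–Baxter equation, then there are an injective
`f` and a nowhere-vanishing `g` such that either (ii) `a = b = g(μ)/(f(λ) − f(μ))`, or
(iii) `f(λ) + f(μ) ≠ 0` for `λ ≠ μ`, `a(λ,μ) = g(μ)/(f(λ) − f(μ))` and
`b(λ,μ) = −g(μ)/(f(λ) + f(μ))`. -/
theorem classification_nonzero_b
    {K : Type*} [Field K] [Infinite K] (hchar : (2 : K) ≠ 0)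
    (a b : K → K → K)
    (ha : ∀ l m : K, l ≠ m → a l m ≠ 0)
    (hb : ∀ l m : K, l ≠ m → b l m ≠ 0)
    (heq1 : ∀ l m n : K, l ≠ m → l ≠ n → m ≠ n →
      a l m * a l n - a l m * a m n - a l n * a n m = 0)
    (heq2 : ∀ l m n : K, l ≠ m → l ≠ n → m ≠ n →
      a l m * b l n - a l m * b m n - b l n * b n m = 0)
    (heq3 : ∀ l m n : K, l ≠ m → l ≠ n → m ≠ n →
      a l n * b l m - a l n * b n m - b l m * b m n = 0)
    (heq4 : ∀ l m n : K, l ≠ m → l ≠ n → m ≠ n →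
      a m n * b l m + a n m * b l n - b l m * b l n = 0) :
    ∃ f g : K → K, Function.Injective f ∧ (∀ x, g x ≠ 0) ∧
      ((∀ l m : K, l ≠ m →
          a l m = g m / (f l - f m) ∧ b l m = g m / (f l - f m)) ∨
       ((∀ l m : K, l ≠ m → f l + f m ≠ 0) ∧
        ∀ l m : K, l ≠ m →
          a l m = g m / (f l - f m) ∧ b l m = -(g m / (f l + f m)))) := by
  classical
  obtain ⟨F, hFd⟩ : ∃ F : K → K, ∀ l, F l = if l = 0 then 0 else (a l 0)⁻¹ :=
    ⟨_, fun l => rfl⟩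
  obtain ⟨G, hGd⟩ : ∃ G : K → K, ∀ m, G m = if m = 0 then 1 else -(a 0 m / a m 0) :=
    ⟨_, fun m => rfl⟩
  have hG0 : ∀ x, G x ≠ 0 := by
    intro x
    rw [hGd x]
    by_cases hx : x = 0
    · simp [hx]
    · rw [if_neg hx]
      exact neg_ne_zero.mpr (div_ne_zero (ha 0 x (Ne.symm hx)) (ha x 0 hx))
  -- key identity for a
  have key_a : ∀ l m : K, l ≠ m → a l m * (F l - F m) = G m := by
    intro l m hlm
    rw [hFd l, hFd m, hGd m]
    by_cases hm : m = 0
    · subst hm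
      rw [if_pos rfl, if_pos rfl, if_neg hlm, sub_zero]
      exact mul_inv_cancel₀ (ha l 0 hlm)
    · by_cases hl : l = 0
      · subst hl
        rw [if_pos rfl, if_neg hm, if_neg hm, zero_sub]
        have h1 := ha m 0 hm
        field_simp
      · rw [if_neg hl, if_neg hm, if_neg hm]
        have e := heq1 l m 0 hlm hl hm
        have h1 := ha l 0 hl
        have h2 := ha m 0 hm
        field_simp
        linear_combination (-1 : K) * e
  -- injectivity of F
  have finj : Function.Injective F := by
    intro l l' hE
    by_contra hne
    rw [hFd l, hFd l'] at hE
    by_cases hl' : l' = 0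
    · subst hl'
      rw [if_pos rfl, if_neg hne] at hE
      exact inv_ne_zero (ha l 0 hne) hE
    · by_cases hl : l = 0
      · subst hl
        rw [if_pos rfl, if_neg hl'] at hE
        exact inv_ne_zero (ha l' 0 hl') hE.symm
      · rw [if_neg hl, if_neg hl'] at hE
        have hEq : a l 0 = a l' 0 := inv_injective hE
        have e := heq1 l l' 0 hne hl hl'
        have : a l 0 * a 0 l' = 0 := by linear_combination (a l l') * hEq - e
        exact mul_ne_zero (ha l 0 hl) (ha 0 l' (Ne.symm hl')) this
  have fsub_ne : ∀ l m : K, l ≠ m → F l - F m ≠ 0 := fun l m hlm =>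
    sub_ne_zero.mpr (fun e => hlm (finj e))
  have a_div : ∀ l m : K, l ≠ m → a l m = G m / (F l - F m) := by
    intro l m hlm
    rw [eq_div_iff (fsub_ne l m hlm)]
    exact key_a l m hlm
  -- auxiliary point selector
  obtain ⟨M, hMd⟩ : ∃ M : K → K, ∀ l, M l = if l = 0 then 1 else 0 :=
    ⟨_, fun l => rfl⟩
  have hM_ne : ∀ l, l ≠ M l := by
    intro l
    rw [hMd l]
    by_cases h : l = 0 <;> simp [h]
  -- define H
  obtain ⟨H, hHd⟩ : ∃ H : K → K, ∀ l, H l = (b l (M l))⁻¹ * G (M l) + F (M l) :=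
    ⟨_, fun l => rfl⟩
  have step4 : ∀ l m n : K, l ≠ m → l ≠ n → m ≠ n →
      (b l m)⁻¹ * G m + F m = (b l n)⁻¹ * G n + F n := by
    intro l m n hlm hln hmn
    have e4 := heq4 l m n hlm hln hmn
    have ka1 := key_a m n hmn
    have ka2 := key_a n m (Ne.symm hmn)
    have h1 := hb l m hlm
    have h2 := hb l n hln
    field_simp
    linear_combination (F n - F m) * e4 - b l n * ka2 + b l m * ka1
  have key_b : ∀ l m : K, l ≠ m → (b l m)⁻¹ * G m = H l - F m := by
    intro l m hlm
    by_cases h : m = M l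
    · subst h
      rw [hHd l]
      ring
    · have e := step4 l m (M l) hlm (hM_ne l) h
      rw [hHd l]
      linear_combination e
  have b_eq : ∀ l m : K, l ≠ m → b l m * (H l - F m) = G m := by
    intro l m hlm
    rw [← key_b l m hlm]
    field_simp [hb l m hlm]
  have hHF_ne : ∀ l m : K, l ≠ m → H l - F m ≠ 0 := by
    intro l m hlm
    rw [← key_b l m hlm]
    exact mul_ne_zero (inv_ne_zero (hb l m hlm)) (hG0 m)
  have b_div : ∀ l m : K, l ≠ m → b l m = G m / (H l - F m) := by
    intro l m hlm
    rw [eq_div_iff (hHF_ne l m hlm)]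
    exact b_eq l m hlm
  -- main relation R from eq (2)
  have R : ∀ l m n : K, l ≠ m → l ≠ n → m ≠ n →
      (H n - F m) * (H m - H l) = (F l - F m) * (H m - F n) := by
    intro l m n hlm hln hmn
    have e2 := heq2 l m n hlm hln hmn
    have ka := key_a l m hlm
    have k1 := b_eq l n hln
    have k2 := b_eq m n hmn
    have k3 := b_eq n m (Ne.symm hmn)
    have key : G m * G n * ((H n - F m) * (H m - H l) - (F l - F m) * (H m - F n)) = 0 := by
      linear_combination
        ((F l - F m) * (H l - F n) * (H m - F n) * (H n - F m)) * e2
        + ((H l - F n) * (H n - F m) * (b m n) * (H m - F n)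
            - (H m - F n) * (H n - F m) * (b l n) * (H l - F n)) * ka
        + ((F l - F m) * (H m - F n) * (b n m) * (H n - F m)
            - (H m - F n) * (H n - F m) * G m) * k1
        + ((H l - F n) * (H n - F m) * G m) * k2
        + ((F l - F m) * (H m - F n) * G n) * k3
    rcases mul_eq_zero.mp key with h | h
    · exact absurd h (mul_ne_zero (hG0 m) (hG0 n))
    · linear_combination h
  -- pairwise dichotomy
  have pair : ∀ m n : K, m ≠ n →
      H m + F m = H n + F n ∨ (H m - F m) + (H n - F n) = 0 := by
    intro m n hmn
    obtain ⟨l, hl⟩ := Infinite.exists_notMem_finset ({m, n} : Finset K)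
    simp only [Finset.mem_insert, Finset.mem_singleton, not_or] at hl
    obtain ⟨hlm, hln⟩ := hl
    obtain ⟨l', hl'⟩ := Infinite.exists_notMem_finset ({m, n, l} : Finset K)
    simp only [Finset.mem_insert, Finset.mem_singleton, not_or] at hl'
    obtain ⟨hl'm, hl'n, hl'l⟩ := hl'
    have S1 : (H n - F m) * (H l' - H l) = (F l - F l') * (H m - F n) := by
      linear_combination R l m n hlm hln hmn - R l' m n hl'm hl'n hmn
    have S2 : (H m - F n) * (H l' - H l) = (F l - F l') * (H n - F m) := by
      linear_combination R l n m hln hlm (Ne.symm hmn) - R l' n m hl'n hl'm (Ne.symm hmn)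
    have hY : F l - F l' ≠ 0 := sub_ne_zero.mpr (fun e => hl'l (finj e).symm)
    have h0 : (F l - F l') * ((H m + F m - (H n + F n)) * ((H m - F m) + (H n - F n))) = 0 := by
      linear_combination (H n - F m) * S2 - (H m - F n) * S1
    rcases mul_eq_zero.mp h0 with h | h
    · exact absurd h hY
    · rcases mul_eq_zero.mp h with h | h
      · left; linear_combination h
      · right; exact h
  by_cases hcase : ∀ z, H z = F z
  · -- case (ii)
    refine ⟨F, G, finj, hG0, Or.inl ?_⟩
    intro l m hlm
    refine ⟨a_div l m hlm, ?_⟩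
    rw [b_div l m hlm, hcase l]
  · -- case (iii)
    push_neg at hcase
    obtain ⟨x, hx⟩ := hcase
    have hsx : ∀ z, H z + F z = H x + F x := by
      intro z
      by_cases hzx : z = x
      · rw [hzx]
      · rcases pair z x hzx with hs | ht
        · exact hs
        · obtain ⟨w, hw⟩ := Infinite.exists_notMem_finset ({x, z} : Finset K)
          simp only [Finset.mem_insert, Finset.mem_singleton, not_or] at hw
          obtain ⟨hwx, hwz⟩ := hw
          rcases pair w x hwx with hs1 | ht1
          · rcases pair w z hwz with hs2 | ht2
            · linear_combination hs2.symm.trans hs1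
            · exfalso
              have h2h : (2:K) * H w = 2 * H x := by linear_combination hs1 + ht2 - ht
              have hHwx : H w = H x := mul_left_cancel₀ hchar h2h
              have hFwx : F w = F x := by linear_combination hs1 - hHwx
              exact hwx (finj hFwx)
          · rcases pair w z hwz with hs2 | ht2
            · exfalso
              have h2h : (2:K) * H w = 2 * H z := by linear_combination hs2 + ht1 - ht
              have hHwz : H w = H z := mul_left_cancel₀ hchar h2h
              have hFwz : F w = F z := by linear_combination hs2 - hHwz
              exact hwz (finj hFwz)
            · exfalso
              have h2 : (2:K) * (H x - F x) = 0 := by linear_combination ht + ht1 - ht2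
              rcases mul_eq_zero.mp h2 with h | h
              · exact hchar h
              · exact hx (by linear_combination h)
    obtain ⟨c, hc2⟩ : ∃ c : K, c * 2 = H x + F x :=
      ⟨(H x + F x) / 2, div_mul_cancel₀ _ hchar⟩
    refine ⟨fun l => F l - c, G, ?_, hG0, Or.inr ⟨?_, ?_⟩⟩
    · intro u v huv
      exact finj (by linear_combination huv)
    · intro l m hlm
      have hm := hsx m
      have hne := hHF_ne m l (Ne.symm hlm)
      intro hsum
      apply hne
      have hsum' : (F l - c) + (F m - c) = 0 := hsum
      linear_combination hm - hsum' - hc2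
    · intro l m hlm
      have hl := hsx l
      constructor
      · show a l m = G m / ((F l - c) - (F m - c))
        have he : (F l - c) - (F m - c) = F l - F m := by ring
        rw [he, a_div l m hlm]
      · show b l m = -(G m / ((F l - c) + (F m - c)))
        have hd : H l - F m = -((F l - c) + (F m - c)) := by
          linear_combination hl - hc2
        rw [b_div l m hlm, hd, div_neg]
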